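/- In the setting of the slope factorization of shuffle algebras (pairings and projections as above), for all F ∈ S⁻_{(-∞,p)} and F' ∈ S^≤, one has [FF']_{<p} = F · [F']_{<p}, where [F']_{<p} ∈ S⁻_{(-∞,p)} is the unique element with ⟨X, [F']_{<p}⟩ = ⟨X, F'⟩ for all X ∈ S⁺_{(-∞,p)}. -/
import Mathlib


/-!
STATEMENT 4: In the slope-factorization setting of the shuffle algebras
(`A = S^≥`, `B = S^≤`, with bialgebra pairing `p`), `B₁ = S⁻_{(-∞,p)}` is the
slope-`< p` subalgebra and `πlt = [·]_{<p}` is the projection characterized by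
`⟨X, [F']_{<p}⟩ = ⟨X, F'⟩` for all `X ∈ A₁ = S⁺_{(-∞,p)}`.  Then for all
`F ∈ S⁻_{(-∞,p)}` and `F' ∈ S^≤` one has `[FF']_{<p} = F·[F']_{<p}`.
-/

open TensorProduct

/-- `pair2 p (a₁ ⊗ a₂) (b₁ ⊗ b₂) = ⟨a₁,b₁⟩⟨a₂,b₂⟩`. -/
noncomputable def pair2 {K A B : Type*} [CommRing K] [AddCommGroup A] [Module K A]
    [AddCommGroup B] [Module K B] (p : A →ₗ[K] Module.Dual K B) :
    A ⊗[K] A →ₗ[K] Module.Dual K (B ⊗[K] B) :=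
  (TensorProduct.dualDistrib K B B) ∘ₗ (TensorProduct.map p p)

/-- `pair2' p (b₁ ⊗ b₂) (a₁ ⊗ a₂) = ⟨a₁,b₁⟩⟨a₂,b₂⟩`. -/
noncomputable def pair2' {K A B : Type*} [CommRing K] [AddCommGroup A] [Module K A]
    [AddCommGroup B] [Module K B] (p : A →ₗ[K] Module.Dual K B) :
    B ⊗[K] B →ₗ[K] Module.Dual K (A ⊗[K] A) :=
  (TensorProduct.dualDistrib K A A) ∘ₗ (TensorProduct.map p.flip p.flip)

theorem projection_lt_left_multiplicative
    {K A B : Type*} [Field K] [Ring A] [Ring B]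
    [Bialgebra K A] [Bialgebra K B]
    (p : A →ₗ[K] Module.Dual K B)
    -- bialgebra pairing axioms
    (hpair1 : ∀ (a : A) (b b' : B),
      p a (b * b') = pair2 p (Coalgebra.comul (R := K) a) (b ⊗ₜ[K] b'))
    (hpair2 : ∀ (a a' : A) (b : B),
      p (a * a') b = pair2' p (Coalgebra.comul (R := K) b) (a' ⊗ₜ[K] a))
    -- slope subalgebras
    (A1 A2 : Subalgebra K A) (B1 B2 : Subalgebra K B)
    -- mixed-slope pairings are given by counits (eqn (epsilon))
    (hmix1 : ∀ e ∈ A2, ∀ f ∈ B1,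
      p e f = Coalgebra.counit (R := K) e * Coalgebra.counit (R := K) f)
    (hmix2 : ∀ e ∈ A1, ∀ f ∈ B2,
      p e f = Coalgebra.counit (R := K) e * Coalgebra.counit (R := K) f)
    -- the coproduct of an element of A₁ = S⁺_{(-∞,p)} has second tensor legs in A₁
    (hΔA1 : ∀ e ∈ A1, Coalgebra.comul (R := K) e ∈
      LinearMap.range (TensorProduct.map (LinearMap.id (R := K) (M := A))
        A1.toSubmodule.subtype))
    -- the restricted pairing A₁ ⊗ B₁ → K is non-degenerate
    (hnondeg : ∀ y ∈ B1, (∀ x ∈ A1, p x y = 0) → y = 0)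
    -- the projection [·]_{<p} : S^≤ → S⁻_{(-∞,p)}
    (πlt : B →ₗ[K] B)
    (hπmem : ∀ y : B, πlt y ∈ B1)
    (hπpair : ∀ y : B, ∀ x ∈ A1, p x (πlt y) = p x y) :
    ∀ F ∈ B1, ∀ (F' : B), πlt (F * F') = F * πlt F' := by
  intro F hF F'
  have hmemπ : ∀ y : B, F * πlt y ∈ B1 := fun y => B1.mul_mem hF (hπmem y)
  have key : ∀ x ∈ A1, ∀ (y y' : B), (∀ a ∈ A1, p a y = p a y') →
      p x (F * y) = p x (F * y') := by
    intro x hx y y' hyy'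
    rw [hpair1, hpair1]
    obtain ⟨t, ht⟩ := hΔA1 x hx
    rw [← ht]; clear ht
    induction t using TensorProduct.induction_on with
    | zero => simp
    | tmul a a₂ =>
        simp only [TensorProduct.map_tmul, LinearMap.id_coe, id_eq, pair2,
          LinearMap.comp_apply, TensorProduct.dualDistrib_apply,
          Submodule.coe_subtype]
        rw [hyy' a₂ a₂.2]
    | add u v hu hv =>
        simp only [map_add, LinearMap.add_apply] at *
        rw [hu, hv]
  have hx1 : ∀ x ∈ A1, p x (πlt (F * F') - F * πlt F') = 0 := by
    intro x hx
    have h1 : p x (πlt (F * F')) = p x (F * F') := hπpair _ x hx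
    have h2 : p x (F * πlt F') = p x (F * F') :=
      key x hx (πlt F') F' (fun a ha => hπpair F' a ha)
    simp [map_sub, h1, h2]
  have hmem : πlt (F * F') - F * πlt F' ∈ B1 :=
    sub_mem (hπmem _) (hmemπ F')
  have := hnondeg _ hmem hx1
  exact sub_eq_zero.mp this
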